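/- arXiv:1207.1172 — 5 statements merged into one kernel-verified Lean document; each statement's English description precedes it below -/
import Mathlib

section
/- Let z ∈ [0,1), q ∈ [-1, 1-2√z) with q + z ≥ 0, and let y = y(q,z) = 2/(1-q+√((1-q)²-4z)). Then there exists a constant C(q,z) < 1 such that for all x ∈ [0, 1/√z): |f(x) - y| ≤ C(q,z)·|x - y|, where f(x) = (1+qx)/(1-zx). In particular one can take C(q,z) = (q+z)/(1-√z)². -/
theorem stmt_3 (q z : ℝ) (hz0 : 0 ≤ z) (hz1 : z < 1)
    (hq1 : -1 ≤ q) (hq2 : q < 1 - 2 * Real.sqrt z) (hqz : 0 ≤ q + z) :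
    (q + z) / (1 - Real.sqrt z) ^ 2 < 1 ∧
    ∀ x : ℝ, 0 ≤ x → Real.sqrt z * x < 1 →
      |(1 + q * x) / (1 - z * x) - 2 / (1 - q + Real.sqrt ((1 - q) ^ 2 - 4 * z))| ≤
        (q + z) / (1 - Real.sqrt z) ^ 2 *
          |x - 2 / (1 - q + Real.sqrt ((1 - q) ^ 2 - 4 * z))| := by
  set s := Real.sqrt z with hs
  have hs0 : 0 ≤ s := Real.sqrt_nonneg z
  have hs2 : s ^ 2 = z := Real.sq_sqrt hz0
  have hs1 : s < 1 := by nlinarith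
  have hD : 0 ≤ (1 - q) ^ 2 - 4 * z := by nlinarith
  set r := Real.sqrt ((1 - q) ^ 2 - 4 * z) with hr
  have hr0 : 0 ≤ r := Real.sqrt_nonneg _
  have hr2 : r ^ 2 = (1 - q) ^ 2 - 4 * z := Real.sq_sqrt hD
  have hA : 0 < 1 - q + r := by nlinarith
  set y := 2 / (1 - q + r) with hy
  have hy0 : 0 ≤ y := div_nonneg (by norm_num) hA.le
  have hyA : y * (1 - q + r) = 2 := by
    rw [hy]; field_simp
  clear_value s r y
  clear hs hr hy
  have hyq : z * y ^ 2 + (q - 1) * y + 1 = 0 := by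
    have hmul : (z * y ^ 2 + (q - 1) * y + 1) * (1 - q + r) ^ 2 = 0 := by
      linear_combination (z * (y * (1 - q + r)) + 2 * z + (q - 1) * (1 - q + r)) * hyA + hr2
    have h2 : (1 - q + r) ^ 2 ≠ 0 := by positivity
    exact (mul_eq_zero.mp hmul).resolve_right h2
  have hzy : z * y ≤ s := by
    nlinarith [hyA, mul_nonneg hs0 hr0, mul_nonneg hs0 (by linarith : (0:ℝ) ≤ 1 - q - 2 * s)]
  have hdy : 0 < 1 - z * y := by linarith
  have hs1' : 0 < 1 - s := by linarith
  have hspos : 0 < (1 - s) ^ 2 := by positivity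
  constructor
  · rw [div_lt_one hspos]; nlinarith
  · intro x hx0 hsx
    have hzx : z * x ≤ s := by
      nlinarith [mul_nonneg hs0 (by linarith : (0:ℝ) ≤ 1 - s * x)]
    have hdx : 0 < 1 - z * x := by linarith
    have key : (1 + q * x) / (1 - z * x) - y
        = ((x - y) * (q + z)) / ((1 - z * x) * (1 - z * y)) := by
      rw [div_sub' hdx.ne', div_eq_div_iff hdx.ne' (mul_pos hdx hdy).ne']
      linear_combination (1 - z * x) ^ 2 * hyq
    rw [key, abs_div, abs_mul, abs_mul, abs_of_nonneg hqz, abs_of_pos hdx, abs_of_pos hdy]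
    have hprod : (1 - s) ^ 2 ≤ (1 - z * x) * (1 - z * y) := by nlinarith
    have hc0 : 0 ≤ (q + z) / (1 - s) ^ 2 := div_nonneg hqz hspos.le
    have hcancel : (q + z) / (1 - s) ^ 2 * (1 - s) ^ 2 = q + z :=
      div_mul_cancel₀ _ hspos.ne'
    rw [div_le_iff₀ (mul_pos hdx hdy)]
    have hcc : (q + z) / (1 - s) ^ 2 * (1 - s) ^ 2 * |x - y| = (q + z) * |x - y| := by
      rw [hcancel]
    have h1 := mul_le_mul_of_nonneg_left hprod (mul_nonneg hc0 (abs_nonneg (x - y)))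
    nlinarith [h1, hcc]
end

section
/- Under the hypotheses 0 ≤ στ ≤ 1, -1 < q ≤ 1-2√(στ), with λ_n defined by λ₀ = 0, λ_{n+1} = (1+qλ_n)/(1-στλ_n), the matrices A_n = [[1-στλ_n, -σ(1+qλ_n)],[-τ(1+qλ_n), 1-στλ_n]] are nonsingular for all n ≥ 0, i.e. (1-στλ_n)² ≠ στ(1+qλ_n)². -/
theorem stmt_6 (σ τ q : ℝ) (h1 : 0 ≤ σ * τ) (h2 : σ * τ ≤ 1)
    (hq1 : -1 < q) (hq2 : q ≤ 1 - 2 * Real.sqrt (σ * τ))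
    (l : ℕ → ℝ) (h0 : l 0 = 0)
    (hrec : ∀ n : ℕ, l (n + 1) = (1 + q * l n) / (1 - σ * τ * l n)) :
    ∀ n : ℕ,
      Matrix.det !![1 - σ * τ * l n, -σ * (1 + q * l n);
                    -τ * (1 + q * l n), 1 - σ * τ * l n] ≠ 0 ∧
      (1 - σ * τ * l n) ^ 2 ≠ σ * τ * (1 + q * l n) ^ 2 := by
  set t := Real.sqrt (σ * τ) with htdef
  have ht0 : 0 ≤ t := Real.sqrt_nonneg _
  have hts : t ^ 2 = σ * τ := Real.sq_sqrt h1
  have ht1 : t < 1 := by linarith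
  -- helper lemmas about the invariant
  have hu' : ∀ x : ℝ, 0 ≤ x → t * x < 1 → 0 < 1 - σ * τ * x := by
    intro x hx htx
    nlinarith [mul_nonneg ht0 hx]
  have key1 : ∀ x : ℝ, 0 ≤ x → t * x < 1 → t * (1 + q * x) < 1 - σ * τ * x := by
    intro x hx htx
    have a := mul_pos (show (0:ℝ) < 1 - t by linarith)
      (show (0:ℝ) < 1 - t * x by linarith)
    have b := mul_nonneg (mul_nonneg ht0 hx) (show (0:ℝ) ≤ 1 - 2 * t - q by linarith)
    nlinarith [a, b]
  have key2 : ∀ x : ℝ, 0 ≤ x → t * x < 1 → 0 < 1 - σ * τ * x + q * (1 + q * x) := by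
    intro x hx htx
    rcases le_or_gt (t ^ 2) (q ^ 2) with hc | hc
    · have : 0 ≤ x * (q ^ 2 - t ^ 2) := mul_nonneg hx (by linarith)
      nlinarith [this]
    · have htpos : 0 < t := by nlinarith [sq_nonneg q]
      have hqt : -t < q := by nlinarith
      have he : 0 ≤ 1 - 2 * t - q := by linarith
      have hQ : 0 < q ^ 2 + t * q + t - t ^ 2 := by
        rcases he.lt_or_eq with he' | he'
        · nlinarith [sq_nonneg (t + q), mul_pos htpos he']
        · nlinarith [sq_nonneg (1 - t)]
      have hm : (t * x) * (t ^ 2 - q ^ 2) < 1 * (t ^ 2 - q ^ 2) :=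
        mul_lt_mul_of_pos_right htx (by linarith)
      by_contra hX
      push_neg at hX
      have hX' : t * (1 - σ * τ * x + q * (1 + q * x)) ≤ 0 :=
        mul_nonpos_of_nonneg_of_nonpos ht0 hX
      nlinarith [hm, hQ, hX']
  -- main invariant
  have key : ∀ n, 0 ≤ l n ∧ t * l n < 1 ∧ 0 < 1 + q * l n := by
    intro n
    induction n with
    | zero => rw [h0]; norm_num
    | succ n ih =>
      obtain ⟨hx, htx, hv⟩ := ih
      have hu := hu' (l n) hx htx
      refine ⟨?_, ?_, ?_⟩
      · rw [hrec n]
        exact div_nonneg hv.le hu.le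
      · rw [hrec n, ← mul_div_assoc]
        rw [div_lt_one hu]
        exact key1 (l n) hx htx
      · rw [hrec n]
        have heq : 1 + q * ((1 + q * l n) / (1 - σ * τ * l n)) =
            (1 - σ * τ * l n + q * (1 + q * l n)) / (1 - σ * τ * l n) := by
          rw [mul_div_assoc', one_add_div hu.ne']
        rw [heq]
        exact div_pos (key2 (l n) hx htx) hu
  intro n
  obtain ⟨hx, htx, hv⟩ := key n
  have hu := hu' (l n) hx htx
  have hk1 := key1 (l n) hx htx
  have htv0 : 0 ≤ t * (1 + q * l n) := mul_nonneg ht0 hv.le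
  have hlt0 : (t * (1 + q * l n)) ^ 2 < (1 - σ * τ * l n) ^ 2 := by
    nlinarith [hk1, htv0]
  have hlt : σ * τ * (1 + q * l n) ^ 2 < (1 - σ * τ * l n) ^ 2 := by
    have h2 : σ * τ * (1 + q * l n) ^ 2 = (t * (1 + q * l n)) ^ 2 := by
      rw [mul_pow, hts]
    rw [h2]; exact hlt0
  constructor
  · rw [Matrix.det_fin_two_of]
    apply ne_of_gt
    nlinarith [hlt]
  · exact ne_of_gt hlt
end

section
/- Let z = στ with 0 ≤ z < 1 and -1 < q < 1-2√z, and let λ_n satisfy λ₀ = 0, λ_{n+1} = (1+qλ_n)/(1-zλ_n). Then (q + z - z(1-λ_{n-1})²)/(1 - z(2λ_n + qλ_n²)) converges as n → ∞ to D(q,z) = 4(q+z)/(1+q+√((1-q)²-4z))², and this can be rewritten as D(q,z) = (1+q-√((1-q)²-4z))/(1+q+√((1-q)²-4z)). Moreover |D(q,z)| < 1. -/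
set_option maxHeartbeats 1600000 in
theorem stmt_8 (z q : ℝ) (hz0 : 0 ≤ z) (hz1 : z < 1)
    (hq1 : -1 < q) (hq2 : q < 1 - 2 * Real.sqrt z)
    (l : ℕ → ℝ) (h0 : l 0 = 0)
    (hrec : ∀ n : ℕ, l (n + 1) = (1 + q * l n) / (1 - z * l n)) :
    Filter.Tendsto
      (fun n : ℕ =>
        (q + z - z * (1 - l n) ^ 2) /
          (1 - z * (2 * l (n + 1) + q * (l (n + 1)) ^ 2)))
      Filter.atTop
      (nhds (4 * (q + z) / (1 + q + Real.sqrt ((1 - q) ^ 2 - 4 * z)) ^ 2)) ∧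
    4 * (q + z) / (1 + q + Real.sqrt ((1 - q) ^ 2 - 4 * z)) ^ 2 =
      (1 + q - Real.sqrt ((1 - q) ^ 2 - 4 * z)) /
        (1 + q + Real.sqrt ((1 - q) ^ 2 - 4 * z)) ∧
    |4 * (q + z) / (1 + q + Real.sqrt ((1 - q) ^ 2 - 4 * z)) ^ 2| < 1 := by
  have hsz := Real.sqrt_nonneg z
  have hzsq : Real.sqrt z ^ 2 = z := Real.sq_sqrt hz0
  have h1q : 0 < 1 - q := by nlinarith
  have hdisc : 0 < (1 - q) ^ 2 - 4 * z := by nlinarith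
  set s := Real.sqrt ((1 - q) ^ 2 - 4 * z) with hs_def
  have hs2 : s ^ 2 = (1 - q) ^ 2 - 4 * z := Real.sq_sqrt hdisc.le
  have hs0 : 0 < s := Real.sqrt_pos.mpr hdisc
  have hs_le : s ≤ 1 - q := by nlinarith
  set a : ℝ := (1 + q + s) / 2 with ha_def
  set b : ℝ := (1 + q - s) / 2 with hb_def
  have ha : 0 < a := by simp only [ha_def]; nlinarith
  have hba : b < a := by simp only [ha_def, hb_def]; nlinarith
  have habs : |b| < a := by
    rw [abs_lt]; constructor <;> simp only [ha_def, hb_def] <;> nlinarith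
  have ha1 : a ≤ 1 := by simp only [ha_def]; nlinarith
  have hb1 : b < 1 := lt_of_lt_of_le (hba.trans_le ha1) le_rfl
  have hq' : a + b = 1 + q := by simp only [ha_def, hb_def]; ring
  have hzab : (1 - a) * (1 - b) = z := by
    simp only [ha_def, hb_def]; nlinarith [hs2]
  clear_value s a b
  -- positivity of the denominator sequence
  have hBpos : ∀ n : ℕ, 0 < (1 - b) * a ^ n + (a - 1) * b ^ n := by
    intro n
    have h1 : |b| ^ n ≤ a ^ n := pow_le_pow_left₀ (abs_nonneg b) habs.le n
    have h2 : b ^ n ≤ |b| ^ n := by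
      rw [← abs_pow]; exact le_abs_self _
    have h3 : 0 < a ^ n := pow_pos ha n
    nlinarith [hs0, hba]
  -- closed form
  have hl : ∀ n : ℕ, l n = (a ^ n - b ^ n) / ((1 - b) * a ^ n + (a - 1) * b ^ n) := by
    intro n
    induction n with
    | zero => simp [h0]
    | succ n ih =>
      have hBn := hBpos n
      have hBn1 := hBpos (n + 1)
      have e1 : (1 - b) * a ^ n + (a - 1) * b ^ n + q * (a ^ n - b ^ n)
          = a ^ (n + 1) - b ^ (n + 1) := by
        have : q = a + b - 1 := by linarith [hq']
        rw [this]; ring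
      have e2 : (1 - b) * a ^ n + (a - 1) * b ^ n - z * (a ^ n - b ^ n)
          = (1 - b) * a ^ (n + 1) + (a - 1) * b ^ (n + 1) := by
        rw [← hzab]; ring
      rw [hrec n, ih]
      have h1 : 1 + q * ((a ^ n - b ^ n) / ((1 - b) * a ^ n + (a - 1) * b ^ n))
          = (a ^ (n + 1) - b ^ (n + 1)) / ((1 - b) * a ^ n + (a - 1) * b ^ n) := by
        rw [mul_div_assoc', one_add_div hBn.ne']; congr 1
      have h2 : 1 - z * ((a ^ n - b ^ n) / ((1 - b) * a ^ n + (a - 1) * b ^ n))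
          = ((1 - b) * a ^ (n + 1) + (a - 1) * b ^ (n + 1)) / ((1 - b) * a ^ n + (a - 1) * b ^ n) := by
        rw [mul_div_assoc', one_sub_div hBn.ne']; congr 1
      rw [h1, h2, div_div_div_comm, div_self hBn.ne', div_one]
  -- rewrite in terms of t = b/a
  have hane : a ≠ 0 := ha.ne'
  have h1b : (0:ℝ) < 1 - b := by linarith
  have hs' : s = a - b := by simp only [ha_def, hb_def]; ring
  have hqab : q = a + b - 1 := by linarith [hq']
  have htabs : |b / a| < 1 := by
    rw [abs_div, abs_of_pos ha, div_lt_one ha]; exact habs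
  have htend : Filter.Tendsto (fun n : ℕ => (b / a) ^ n) Filter.atTop (nhds 0) :=
    tendsto_pow_atTop_nhds_zero_of_abs_lt_one htabs
  have hl' : ∀ n : ℕ, l n = (1 - (b / a) ^ n) / ((1 - b) + (a - 1) * (b / a) ^ n) := by
    intro n
    have hapow : (0:ℝ) < a ^ n := pow_pos ha n
    have e3 : 1 - (b / a) ^ n = (a ^ n - b ^ n) / a ^ n := by
      rw [div_pow]; field_simp
    have e4 : (1 - b) + (a - 1) * (b / a) ^ n
        = ((1 - b) * a ^ n + (a - 1) * b ^ n) / a ^ n := by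
      rw [div_pow]; field_simp
    rw [hl n, e3, e4, div_div_div_comm, div_self hapow.ne', div_one]
  set y : ℝ := 1 / (1 - b) with hy_def
  clear_value y
  have hly : Filter.Tendsto l Filter.atTop (nhds y) := by
    have hmain : Filter.Tendsto
        (fun n : ℕ => (1 - (b / a) ^ n) / ((1 - b) + (a - 1) * (b / a) ^ n))
        Filter.atTop (nhds ((1 - 0) / ((1 - b) + (a - 1) * 0))) := by
      refine Filter.Tendsto.div (tendsto_const_nhds.sub htend)
        (tendsto_const_nhds.add (htend.const_mul (a - 1))) ?_
      simp [h1b.ne']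
    have : (1 - (0:ℝ)) / ((1 - b) + (a - 1) * 0) = y := by rw [hy_def]; ring_nf
    rw [this] at hmain
    exact hmain.congr (fun n => (hl' n).symm)
  have hly1 : Filter.Tendsto (fun n : ℕ => l (n + 1)) Filter.atTop (nhds y) :=
    hly.comp (Filter.tendsto_add_atTop_nat 1)
  have hnum : Filter.Tendsto (fun n : ℕ => q + z - z * (1 - l n) ^ 2)
      Filter.atTop (nhds (q + z - z * (1 - y) ^ 2)) :=
    tendsto_const_nhds.sub (((tendsto_const_nhds.sub hly).pow 2).const_mul z)
  have hden : Filter.Tendsto (fun n : ℕ => 1 - z * (2 * l (n + 1) + q * (l (n + 1)) ^ 2))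
      Filter.atTop (nhds (1 - z * (2 * y + q * y ^ 2))) :=
    tendsto_const_nhds.sub (((hly1.const_mul 2).add ((hly1.pow 2).const_mul q)).const_mul z)
  have hnval : q + z - z * (1 - y) ^ 2 = b * s / (1 - b) := by
    rw [hy_def, ← hzab, hqab, hs']; field_simp; ring
  have h1b' : (1 : ℝ) - b ≠ 0 := h1b.ne'
  have hdval : 1 - z * (2 * y + q * y ^ 2) = a * s / (1 - b) := by
    rw [hy_def, ← hzab, hqab, hs']; field_simp; ring
  have h2a : 1 + q + s = 2 * a := by rw [ha_def]; ring
  have h2b : 1 + q - s = 2 * b := by rw [hb_def]; ring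
  have hqz : q + z = a * b := by linear_combination -hzab - hq'
  have hD : 4 * (q + z) / (1 + q + s) ^ 2 = b / a := by
    rw [hqz, h2a]; field_simp; ring
  refine ⟨?_, ?_, ?_⟩
  · have hdenne : 1 - z * (2 * y + q * y ^ 2) ≠ 0 := by
      rw [hdval]; positivity
    have hT := Filter.Tendsto.div hnum hden hdenne
    have hval : (q + z - z * (1 - y) ^ 2) / (1 - z * (2 * y + q * y ^ 2))
        = 4 * (q + z) / (1 + q + s) ^ 2 := by
      rw [hnval, hdval, hD, div_div_div_comm, div_self h1b', div_one,
        mul_comm b s, mul_comm a s, mul_div_mul_left _ _ hs0.ne']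
    rw [← hval]
    exact hT
  · rw [hD, h2b, h2a]; field_simp
  · rw [hD, abs_div, abs_of_pos ha]
    rw [div_lt_one ha]
    exact habs
end

section
/- Suppose the real sequences {α_n}, {β_n} satisfy τα_n α_{n+1} + qα_n β_{n+1} + σβ_n β_{n+1} = α_{n+1}β_n for all n ≥ 0, with α₀ = 0, β₀ = 1, and suppose λ_n (given by λ₀ = 0, λ_{n+1} = (1+qλ_n)/(1-στλ_n)) satisfies λ_n ≠ 0 for all n ≥ 1 and 1-στλ_n ≠ 0. If additionally β_n ≠ 0 forces the recursion to be solvable, then for all n ≥ 0: α_n = σλ_n β_n and β_n ≠ 0. -/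
theorem stmt_10 (σ τ q : ℝ) (l α β : ℕ → ℝ)
    (hl0 : l 0 = 0)
    (hldef : ∀ n : ℕ, 1 - σ * τ * l n ≠ 0)
    (hlrec : ∀ n : ℕ, l (n + 1) = (1 + q * l n) / (1 - σ * τ * l n))
    (hlne : ∀ n : ℕ, 1 ≤ n → l n ≠ 0)
    (hα0 : α 0 = 0) (hβ0 : β 0 = 1)
    (hnz : ∀ n : ℕ, ¬(α n = 0 ∧ β n = 0))
    (heq : ∀ n : ℕ,
      τ * α n * α (n + 1) + q * α n * β (n + 1) + σ * β n * β (n + 1) =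
        α (n + 1) * β n) :
    ∀ n : ℕ, α n = σ * l n * β n ∧ β n ≠ 0 := by
  intro n
  induction n with
  | zero => simp [hα0, hβ0, hl0]
  | succ n ih =>
    obtain ⟨hα, hβ⟩ := ih
    have key : α (n + 1) * (1 - σ * τ * l n) = σ * (1 + q * l n) * β (n + 1) := by
      have h := heq n
      rw [hα] at h
      apply mul_left_cancel₀ hβ
      linear_combination -h
    have hβ1 : β (n + 1) ≠ 0 := by
      intro h0
      apply hnz (n + 1)
      refine ⟨?_, h0⟩
      have := key
      rw [h0] at this
      simpa [hldef n] using mul_eq_zero.mp (by linarith : α (n+1) * (1 - σ * τ * l n) = 0)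
    constructor
    · have h3 : σ * ((1 + q * l n) / (1 - σ * τ * l n)) * β (n + 1) =
          σ * (1 + q * l n) * β (n + 1) / (1 - σ * τ * l n) := by ring
      rw [hlrec n, h3, eq_div_iff (hldef n)]
      linear_combination key
    · exact hβ1
end

section
/- Suppose q = 1 - 2√(στ) with στ ∈ [0,1). Then the sequence λ₀ = 0, λ_{n+1} = (1+qλ_n)/(1-στλ_n) has the closed form λ_n = n/(1+(n-1)√(στ)) for all n ≥ 0. -/
theorem stmt_17 (σ τ : ℝ) (h0 : 0 ≤ σ * τ) (h1 : σ * τ < 1)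
    (q : ℝ) (hq : q = 1 - 2 * Real.sqrt (σ * τ))
    (l : ℕ → ℝ) (hl0 : l 0 = 0)
    (hrec : ∀ n : ℕ, l (n + 1) = (1 + q * l n) / (1 - σ * τ * l n)) :
    ∀ n : ℕ, l n = (n : ℝ) / (1 + ((n : ℝ) - 1) * Real.sqrt (σ * τ)) := by
  set p := Real.sqrt (σ * τ) with hp
  have hp0 : 0 ≤ p := Real.sqrt_nonneg _
  have hp2 : p * p = σ * τ := Real.mul_self_sqrt h0
  have hp1 : p < 1 := by
    nlinarith
  have hd : ∀ n : ℕ, 0 < 1 + ((n : ℝ) - 1) * p := by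
    intro n
    rcases Nat.eq_zero_or_pos n with h | h
    · simp [h]; linarith
    · have : (1 : ℝ) ≤ (n : ℝ) := by exact_mod_cast h
      nlinarith
  intro n
  induction n with
  | zero => simp [hl0]
  | succ n ih =>
    have hdn := hd n
    have hdn1 := hd (n + 1)
    have key : 1 - σ * τ * l n = (1 - p) * (1 + (n : ℝ) * p) / (1 + ((n : ℝ) - 1) * p) := by
      rw [ih, ← hp2, mul_div_assoc', one_sub_div hdn.ne']; congr 1; ring
    have hnum : 1 + q * l n = ((n : ℝ) + 1) * (1 - p) / (1 + ((n : ℝ) - 1) * p) := by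
      rw [ih, hq, mul_div_assoc', one_add_div hdn.ne']; congr 1; ring
    have h1p : (0 : ℝ) < 1 - p := by linarith
    have hnp : (0 : ℝ) < 1 + (n : ℝ) * p := by positivity
    rw [hrec, key, hnum]
    have h11 : 1 + ((n:ℝ) + 1 - 1) * p = 1 + (n:ℝ) * p := by ring
    rw [Nat.cast_add, Nat.cast_one, h11, div_div_div_eq]
    rw [div_eq_div_iff (by positivity) (by positivity)]
    ring
end
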